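/- The orbit of 1 under the Θ-group acting on ℚ ∪ {∞} by Möbius transformations is exactly the set of rationals m/n in lowest terms with both m and n odd. -/

import Mathlib

abbrev SL2Z := Matrix.SpecialLinearGroup (Fin 2) ℤ

/-- The mod 2 condition defining the Θ-group: a ≡ d, b ≡ c, a ≢ b (mod 2). -/
def ThetaCond (M : SL2Z) : Prop :=
  M.1 0 0 % 2 = M.1 1 1 % 2 ∧ M.1 0 1 % 2 = M.1 1 0 % 2 ∧ M.1 0 0 % 2 ≠ M.1 0 1 % 2

/-- A rational number is in the Θ-orbit of 1 (i.e., equals (a+b)/(c+d) for some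
[[a,b],[c,d]] ∈ Θ with c+d ≠ 0) iff, in lowest terms m/n, both m and n are odd. -/
theorem theta_orbit_one (q : ℚ) :
    (∃ M : SL2Z, ThetaCond M ∧ ((M.1 1 0 + M.1 1 1 : ℤ) : ℚ) ≠ 0 ∧
        q = ((M.1 0 0 + M.1 0 1 : ℤ) : ℚ) / ((M.1 1 0 + M.1 1 1 : ℤ) : ℚ)) ↔
      (Odd q.num ∧ Odd (q.den : ℤ)) := by
  constructor
  · rintro ⟨M, ⟨had, hbc, hab⟩, hn0, hq⟩
    set a := M.1 0 0 with ha
    set b := M.1 0 1 with hb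
    set c := M.1 1 0 with hc
    set d := M.1 1 1 with hd
    have hdet : a * d - b * c = 1 := by
      have := M.2
      rw [Matrix.det_fin_two] at this
      exact this
    set m := a + b with hm
    set n := c + d with hn
    have hoddm : Odd m := Int.odd_iff.mpr (by omega)
    have hoddn : Odd n := Int.odd_iff.mpr (by omega)
    have hnz : n ≠ 0 := by exact_mod_cast hn0
    -- cross multiply
    have key : m * (q.den : ℤ) = q.num * n := by
      have h1 : (q.num : ℚ) / (q.den : ℚ) = (m : ℚ) / (n : ℚ) := by
        rw [Rat.num_div_den]; exact hq
      have hdq : ((q.den : ℤ) : ℚ) ≠ 0 := by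
        exact_mod_cast (Nat.cast_ne_zero (R := ℚ)).mpr q.den_nz
      rw [div_eq_div_iff (by exact_mod_cast hdq) (by exact_mod_cast hn0)] at h1
      exact_mod_cast h1.symm
    have hnumodd : Odd q.num := by
      by_contra h
      have heven : Even q.num := Int.not_odd_iff_even.mp h
      have : Even (m * (q.den : ℤ)) := by rw [key]; exact heven.mul_right n
      have hevden : Even ((q.den : ℤ)) := by
        rcases Int.even_mul.mp this with h' | h'
        · exact absurd h' (Int.not_even_iff_odd.mpr hoddm)
        · exact h'
      have h2n : 2 ∣ q.num.natAbs := by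
        have := heven.two_dvd
        exact Int.natAbs_dvd_natAbs.mpr this
      have h2d : 2 ∣ q.den := by
        have := hevden.two_dvd
        exact_mod_cast this
      have := Nat.dvd_gcd h2n h2d
      rw [q.reduced] at this
      omega
    refine ⟨hnumodd, ?_⟩
    have : Odd (m * (q.den : ℤ)) := by rw [key]; exact hnumodd.mul hoddn
    exact (Int.odd_mul.mp this).2
  · rintro ⟨hnum, hden⟩
    set m := q.num with hm
    set n := (q.den : ℤ) with hn
    have hnz : n ≠ 0 := by
      simp [hn, q.den_nz]
    have cop : IsCoprime m n := by
      rw [Int.isCoprime_iff_gcd_eq_one]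
      exact q.reduced
    obtain ⟨u, v, huv⟩ := cop
    -- matrix [[m+v, -v], [n-u, u]]
    have hdet : (!![m + v, -v; n - u, u] : Matrix (Fin 2) (Fin 2) ℤ).det = 1 := by
      rw [Matrix.det_fin_two_of]
      ring_nf
      linarith [huv]
    refine ⟨⟨!![m + v, -v; n - u, u], hdet⟩, ?_, ?_, ?_⟩
    · -- ThetaCond
      have h1 : Odd (u * m + v * n) := huv ▸ odd_one
      have hmo : m % 2 = 1 := Int.odd_iff.mp hnum
      have hno : n % 2 = 1 := Int.odd_iff.mp hden
      have hpar : u % 2 ≠ v % 2 := by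
        intro hcon
        rcases Int.even_or_odd u with hu | hu
        · have hv : Even v := Int.even_iff.mpr (by
            have := Int.even_iff.mp hu; omega)
          have : Even (u * m + v * n) := (hu.mul_right m).add (hv.mul_right n)
          exact (Int.not_odd_iff_even.mpr this) h1
        · have hv : Odd v := Int.odd_iff.mpr (by
            have := Int.odd_iff.mp hu; omega)
          have : Even (u * m + v * n) := (hu.mul hnum).add_odd (hv.mul hden)
          exact (Int.not_odd_iff_even.mpr this) h1
      refine ⟨?_, ?_, ?_⟩ <;>
        simp only [Matrix.of_apply, Matrix.cons_val', Matrix.cons_val_zero, Matrix.cons_val_one,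
          Matrix.head_cons, Matrix.head_fin_const, Matrix.empty_val',
          Matrix.cons_val_fin_one] <;> omega
    · -- nonzero denominator
      have : (n - u) + u = n := by ring
      simp only [Matrix.of_apply, Matrix.cons_val', Matrix.cons_val_zero, Matrix.cons_val_one,
        Matrix.head_cons, Matrix.head_fin_const, Matrix.empty_val',
        Matrix.cons_val_fin_one]
      rw [this]
      exact_mod_cast hnz
    · -- q = (a+b)/(c+d)
      simp only [Matrix.of_apply, Matrix.cons_val', Matrix.cons_val_zero, Matrix.cons_val_one,
        Matrix.head_cons, Matrix.head_fin_const, Matrix.empty_val',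
        Matrix.cons_val_fin_one]
      have h1 : m + v + -v = m := by ring
      have h2 : (n - u) + u = n := by ring
      rw [h1, h2, hm, hn]
      push_cast
      rw [Rat.num_div_den]
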